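/- Let (V, e_V) and (W, e_W) be absolute order unit spaces and φ : V → W a surjective linear order isometry. Then φ is unital: φ(e_V) = e_W. -/

import Mathlib

/-- An absolutely ordered space: a real ordered vector space `(V, P)` together with an
absolute value map `abs : V → P` satisfying axioms (a)–(e). -/
structure AbsOrderedSpace (V : Type*) [AddCommGroup V] [Module ℝ V] where
  /-- the positive cone -/
  P : Set V
  add_mem : ∀ u ∈ P, ∀ v ∈ P, u + v ∈ P
  smul_mem : ∀ (k : ℝ), 0 ≤ k → ∀ v ∈ P, k • v ∈ P
  /-- the absolute value map -/
  abs : V → V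
  abs_mem : ∀ v, abs v ∈ P
  /-- (a) -/
  abs_of_mem : ∀ v ∈ P, abs v = v
  /-- (b) -/
  abs_add_mem : ∀ v, abs v + v ∈ P
  abs_sub_mem : ∀ v, abs v - v ∈ P
  /-- (c) -/
  abs_smul : ∀ (k : ℝ) (v : V), abs (k • v) = |k| • abs v
  /-- (d) -/
  axiom_d : ∀ u v w : V, abs (u - v) = u + v → w ∈ P → v - w ∈ P → abs (u - w) = u + w
  /-- (e) -/
  axiom_e₁ : ∀ u v w : V, abs (u - v) = u + v → abs (u - w) = u + w →
    abs (u - abs (v + w)) = u + abs (v + w)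
  axiom_e₂ : ∀ u v w : V, abs (u - v) = u + v → abs (u - w) = u + w →
    abs (u - abs (v - w)) = u + abs (v - w)
/-- An absolute order unit space: an absolutely ordered space whose norm is the order unit
norm determined by an order unit `e`, with closed cone, satisfying
`‖v‖ ≤ max(‖u‖, ‖w‖)` for `u ≤ v ≤ w`, and in which orthogonality coincides with absolute
`∞`-orthogonality on the positive cone. -/
structure AbsOrderUnitSpace (V : Type*) [NormedAddCommGroup V] [NormedSpace ℝ V] extends
    AbsOrderedSpace V where
  /-- the order unit -/
  e : V
  e_mem : e ∈ P
  cone_closed : IsClosed P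
  /-- `e` is an order unit -/
  orderUnit : ∀ v : V, ∃ k : ℝ, 0 < k ∧ k • e + v ∈ P ∧ k • e - v ∈ P
  /-- the norm is the order unit norm determined by `e` -/
  norm_eq : ∀ v : V, ‖v‖ = sInf {k : ℝ | 0 < k ∧ k • e + v ∈ P ∧ k • e - v ∈ P}
  /-- condition (a): `‖v‖ ≤ max (‖u‖, ‖w‖)` whenever `u ≤ v ≤ w` -/
  norm_le_max : ∀ u v w : V, v - u ∈ P → w - v ∈ P → ‖v‖ ≤ max ‖u‖ ‖w‖
  /-- condition (b): `⊥ = ⊥ᵃ_∞` on the positive cone -/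
  perp_iff : ∀ u ∈ P, ∀ v ∈ P,
    (abs (u - v) = u + v ↔
      ∀ u₁ v₁ : V, u₁ ∈ P → u - u₁ ∈ P → v₁ ∈ P → v - v₁ ∈ P →
        ∀ α β : ℝ, ‖α • u₁ + β • v₁‖ = max ‖α • u₁‖ ‖β • v₁‖)

/-- `l_V(v) = inf {‖u‖ : u ∈ V⁺, u + v ∈ V⁺}`. -/
noncomputable def AbsOrderUnitSpace.ell {V : Type*} [NormedAddCommGroup V]
    [NormedSpace ℝ V] (A : AbsOrderUnitSpace V) (v : V) : ℝ :=
  sInf {r : ℝ | ∃ u ∈ A.P, u + v ∈ A.P ∧ ‖u‖ = r}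

namespace AbsOrderUnitSpaceAux

variable {V : Type*} [NormedAddCommGroup V] [NormedSpace ℝ V] (A : AbsOrderUnitSpace V)

lemma zero_mem : (0:V) ∈ A.P := by
  simpa using A.smul_mem 0 le_rfl A.e A.e_mem

lemma eq_zero_of_mem_of_neg_mem {u : V} (hu : u ∈ A.P) (hnu : -u ∈ A.P) : u = 0 := by
  have h1 : A.abs u = u := A.abs_of_mem u hu
  have h2 : A.abs (-u) = -u := A.abs_of_mem _ hnu
  have h3 : A.abs (-u) = A.abs u := by
    have := A.abs_smul (-1) u
    simpa using this
  have h4 : -u = u := by rw [← h2, h3, h1]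
  have h5 : (2:ℝ) • u = 0 := by
    rw [two_smul]
    nth_rewrite 1 [← h4]
    exact neg_add_cancel u
  rcases smul_eq_zero.mp h5 with h | h
  · norm_num at h
  · exact h

lemma ell_bddBelow (v : V) : BddBelow {r : ℝ | ∃ u ∈ A.P, u + v ∈ A.P ∧ ‖u‖ = r} :=
  ⟨0, by rintro r ⟨u, _, _, rfl⟩; exact norm_nonneg u⟩

lemma ell_nonempty (v : V) : {r : ℝ | ∃ u ∈ A.P, u + v ∈ A.P ∧ ‖u‖ = r}.Nonempty := by
  obtain ⟨k, hk, h1, _⟩ := A.orderUnit v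
  exact ⟨‖k • A.e‖, k • A.e, A.smul_mem k hk.le _ A.e_mem, h1, rfl⟩

lemma ell_le {u v : V} (hu : u ∈ A.P) (huv : u + v ∈ A.P) : A.ell v ≤ ‖u‖ :=
  csInf_le (ell_bddBelow A v) ⟨u, hu, huv, rfl⟩

lemma mem_of_ell_le_zero {v : V} (h : A.ell v ≤ 0) : v ∈ A.P := by
  rw [← A.cone_closed.closure_eq, Metric.mem_closure_iff]
  intro ε hε
  have hlt : A.ell v < ε := lt_of_le_of_lt h hε
  obtain ⟨r, ⟨u, hu, huv, rfl⟩, hru⟩ := exists_lt_of_csInf_lt (ell_nonempty A v) hlt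
  refine ⟨u + v, huv, ?_⟩
  rw [dist_eq_norm]
  have : v - (u + v) = -u := by abel
  rw [this, norm_neg]
  exact hru

/-- If `ε • w + v ∈ P` for all `ε > 0`, then `v ∈ P`. -/
lemma closed_ray {v w : V} (h : ∀ ε : ℝ, 0 < ε → ε • w + v ∈ A.P) : v ∈ A.P := by
  rw [← A.cone_closed.closure_eq, Metric.mem_closure_iff]
  intro ε hε
  set δ : ℝ := ε / (‖w‖ + 1) with hδ
  have hδpos : 0 < δ := div_pos hε (by positivity)
  refine ⟨δ • w + v, h δ hδpos, ?_⟩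
  rw [dist_eq_norm]
  have : v - (δ • w + v) = -(δ • w) := by abel
  rw [this, norm_neg, norm_smul, Real.norm_eq_abs, abs_of_pos hδpos]
  calc δ * ‖w‖ < δ * (‖w‖ + 1) := by nlinarith
    _ = ε := by rw [hδ, div_mul_cancel₀ _ (by positivity)]

lemma norm_smul_e_mem (u : V) : ‖u‖ • A.e + u ∈ A.P ∧ ‖u‖ • A.e - u ∈ A.P := by
  set S : Set ℝ := {k : ℝ | 0 < k ∧ k • A.e + u ∈ A.P ∧ k • A.e - u ∈ A.P} with hS
  have hne : S.Nonempty := A.orderUnit u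
  have hbdd : BddBelow S := ⟨0, fun k hk => hk.1.le⟩
  have hnorm : ‖u‖ = sInf S := A.norm_eq u
  have key : ∀ ε : ℝ, 0 < ε → ((‖u‖ + ε) • A.e + u ∈ A.P ∧ (‖u‖ + ε) • A.e - u ∈ A.P) := by
    intro ε hε
    have hlt : sInf S < ‖u‖ + ε := by rw [← hnorm]; linarith
    obtain ⟨k, hkS, hk⟩ := exists_lt_of_csInf_lt hne hlt
    obtain ⟨hk0, hk1, hk2⟩ := hkS
    constructor
    · have := A.add_mem _ (A.smul_mem (‖u‖ + ε - k) (by linarith) _ A.e_mem) _ hk1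
      have heq : (‖u‖ + ε - k) • A.e + (k • A.e + u) = (‖u‖ + ε) • A.e + u := by
        rw [sub_smul, add_smul]; abel
      rwa [heq] at this
    · have := A.add_mem _ (A.smul_mem (‖u‖ + ε - k) (by linarith) _ A.e_mem) _ hk2
      have heq : (‖u‖ + ε - k) • A.e + (k • A.e - u) = (‖u‖ + ε) • A.e - u := by
        rw [sub_smul, add_smul]; abel
      rwa [heq] at this
  constructor
  · apply closed_ray A (w := A.e)
    intro ε hε
    have := (key ε hε).1
    have heq : (‖u‖ + ε) • A.e + u = ε • A.e + (‖u‖ • A.e + u) := by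
      rw [add_smul]; abel
    rwa [heq] at this
  · apply closed_ray A (w := A.e)
    intro ε hε
    have := (key ε hε).2
    have heq : (‖u‖ + ε) • A.e - u = ε • A.e + (‖u‖ • A.e - u) := by
      rw [add_smul]; abel
    rwa [heq] at this

lemma e_add_mem_of_ell_le_one {v : V} (h : A.ell v ≤ 1) : A.e + v ∈ A.P := by
  apply closed_ray A (w := A.e)
  intro ε hε
  have hlt : A.ell v < 1 + ε := by linarith
  obtain ⟨r, ⟨u, hu, huv, rfl⟩, hru⟩ := exists_lt_of_csInf_lt (ell_nonempty A v) hlt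
  have h1 : ‖u‖ • A.e - u ∈ A.P := (norm_smul_e_mem A u).2
  have h2 : ‖u‖ • A.e + v ∈ A.P := by
    have := A.add_mem _ h1 _ huv
    have heq : ‖u‖ • A.e - u + (u + v) = ‖u‖ • A.e + v := by abel
    rwa [heq] at this
  have h3 := A.add_mem _ (A.smul_mem (1 + ε - ‖u‖) (by linarith) _ A.e_mem) _ h2
  have heq : (1 + ε - ‖u‖) • A.e + (‖u‖ • A.e + v) = ε • A.e + (A.e + v) := by
    rw [sub_smul, add_smul, one_smul]; abel
  rwa [heq] at h3

lemma norm_e_le_one : ‖A.e‖ ≤ 1 := by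
  apply le_of_forall_pos_le_add
  intro ε hε
  rw [A.norm_eq A.e]
  apply csInf_le ⟨0, fun k hk => hk.1.le⟩
  refine ⟨by linarith, ?_, ?_⟩
  · have := A.smul_mem (1 + ε + 1) (by linarith) _ A.e_mem
    have heq : (1 + ε + 1) • A.e = (1 + ε) • A.e + A.e := by
      rw [add_smul, one_smul]
    rwa [heq] at this
  · have := A.smul_mem ε hε.le _ A.e_mem
    have heq : ε • A.e = (1 + ε) • A.e - A.e := by
      rw [add_smul, one_smul]; abel
    rwa [heq] at this

end AbsOrderUnitSpaceAux

/-- A surjective linear order isometry between absolute order unit spaces is unital. -/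
theorem orderIsometry_unital {V W : Type*} [NormedAddCommGroup V] [NormedSpace ℝ V]
    [NormedAddCommGroup W] [NormedSpace ℝ W]
    (A : AbsOrderUnitSpace V) (B : AbsOrderUnitSpace W) (φ : V →ₗ[ℝ] W)
    (hsurj : Function.Surjective φ) (hiso : ∀ v : V, B.ell (φ v) = A.ell v) :
    φ A.e = B.e := by
  open AbsOrderUnitSpaceAux in
  -- φ maps the positive cone into the positive cone
  have hφP : ∀ v ∈ A.P, φ v ∈ B.P := by
    intro v hv
    apply mem_of_ell_le_zero B
    rw [hiso v]
    have := ell_le A (zero_mem A) (by simpa using hv)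
    simpa using this
  -- B.e - φ A.e ∈ B.P
  have h1 : B.e - φ A.e ∈ B.P := by
    have hell : B.ell (-(φ A.e)) ≤ 1 := by
      rw [← map_neg, hiso]
      have := ell_le A (v := -A.e) A.e_mem (by simpa using zero_mem A)
      exact this.trans (norm_e_le_one A)
    have := e_add_mem_of_ell_le_one B hell
    rwa [← sub_eq_add_neg] at this
  -- φ A.e - B.e ∈ B.P
  have h2 : φ A.e - B.e ∈ B.P := by
    obtain ⟨x, hx⟩ := hsurj B.e
    have hell : A.ell (-x) ≤ 1 := by
      rw [← hiso, map_neg, hx]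
      have := ell_le B (v := -B.e) B.e_mem (by simpa using zero_mem B)
      exact this.trans (norm_e_le_one B)
    have hA : A.e - x ∈ A.P := by
      have := e_add_mem_of_ell_le_one A hell
      rwa [← sub_eq_add_neg] at this
    have := hφP _ hA
    rwa [map_sub, hx] at this
  have := eq_zero_of_mem_of_neg_mem B h2 (by simpa using h1)
  exact sub_eq_zero.mp this
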